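/- Along any solution of the tilted Bianchi type VI_{-1/9} system with Ω(τ) > 0 and 0 < V(τ) < 1, the function Z1 = Ω^{1−γ}·(1−V²)^{(2−γ)/2} / (G+^{1−γ}·V^{γ}) satisfies the identity Z1' = (2(1−γ)q + (2−γ) + γS)·Z1. -/

import Mathlib

noncomputable section

namespace BianchiVI

/-- squared tilt speed `V² = v1² + v2² + v3²`. -/
def Vsq (v1 v2 v3 : ℝ) : ℝ := v1^2 + v2^2 + v3^2

/-- `G₊ = 1 + (γ-1) V²`. -/
def Gp (γ v1 v2 v3 : ℝ) : ℝ := 1 + (γ - 1) * Vsq v1 v2 v3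

/-- total shear `Σ²`. -/
def Sig2 (sp sm s12 s13 s23 : ℝ) : ℝ := sp^2 + sm^2 + s12^2 + s13^2 + s23^2

/-- deceleration parameter `q`. -/
def qdef (γ sp sm s12 s13 s23 Om v1 v2 v3 : ℝ) : ℝ :=
  2 * Sig2 sp sm s12 s13 s23
    + (1/2) * ((3*γ - 2) + (2 - γ) * Vsq v1 v2 v3) * Om / Gp γ v1 v2 v3

/-- `P = Σ_{ab} v^a v^b · V²`, so that `S = P/V²`. -/
def Pdef (sp sm s12 s13 s23 v1 v2 v3 : ℝ) : ℝ :=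
  -2*sp*v1^2 + (sp + Real.sqrt 3 * sm) * v2^2 + (sp - Real.sqrt 3 * sm) * v3^2
    + 2*Real.sqrt 3*(s12*v1*v2 + s13*v1*v3 + s23*v2*v3)

/-- `S = Σ_{ab} c^a c^b`. -/
def Sdef (sp sm s12 s13 s23 v1 v2 v3 : ℝ) : ℝ :=
  if 0 < Vsq v1 v2 v3 then Pdef sp sm s12 s13 s23 v1 v2 v3 / Vsq v1 v2 v3 else 0

/-- the quantity `T`. -/
def Tdef (γ sp sm s12 s13 s23 A v1 v2 v3 : ℝ) : ℝ :=
  (((3*γ - 4) - 2*(γ-1)*A*v1) * (1 - Vsq v1 v2 v3)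
      + (2 - γ) * Pdef sp sm s12 s13 s23 v1 v2 v3)
    / (1 - (γ - 1) * Vsq v1 v2 v3)

/-- right-hand side of the evolution equation. -/
def rhsSp (γ sp sm s12 s13 s23 N lam A Om v1 v2 v3 : ℝ) : ℝ :=
  (qdef γ sp sm s12 s13 s23 Om v1 v2 v3 - 2) * sp + 3*(s12^2 + s13^2) - 2*N^2 + (γ*Om/(2*(Gp γ v1 v2 v3))) * (-2*v1^2 + v2^2 + v3^2)

/-- right-hand side of the evolution equation. -/
def rhsSm (γ sp sm s12 s13 s23 N lam A Om v1 v2 v3 : ℝ) : ℝ :=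
  (qdef γ sp sm s12 s13 s23 Om v1 v2 v3 - 2 - 2*Real.sqrt 3*s23*lam) * sm + Real.sqrt 3*(s12^2 - s13^2) + 2*A*N + (Real.sqrt 3*γ*Om/(2*(Gp γ v1 v2 v3))) * (v2^2 - v3^2)

/-- right-hand side of the evolution equation. -/
def rhsS12 (γ sp sm s12 s13 s23 N lam A Om v1 v2 v3 : ℝ) : ℝ :=
  (qdef γ sp sm s12 s13 s23 Om v1 v2 v3 - 2 - 3*sp - Real.sqrt 3*sm) * s12 - Real.sqrt 3*(s23 + sm*lam)*s13 + (Real.sqrt 3*γ*Om/(Gp γ v1 v2 v3))*v1*v2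

/-- right-hand side of the evolution equation. -/
def rhsS13 (γ sp sm s12 s13 s23 N lam A Om v1 v2 v3 : ℝ) : ℝ :=
  (qdef γ sp sm s12 s13 s23 Om v1 v2 v3 - 2 - 3*sp + Real.sqrt 3*sm) * s13 - Real.sqrt 3*(s23 - sm*lam)*s12 + (Real.sqrt 3*γ*Om/(Gp γ v1 v2 v3))*v1*v3

/-- right-hand side of the evolution equation. -/
def rhsS23 (γ sp sm s12 s13 s23 N lam A Om v1 v2 v3 : ℝ) : ℝ :=
  (qdef γ sp sm s12 s13 s23 Om v1 v2 v3 - 2) * s23 - 2*Real.sqrt 3*N^2*lam + 2*Real.sqrt 3*lam*sm^2 + 2*Real.sqrt 3*s12*s13 + (Real.sqrt 3*γ*Om/(Gp γ v1 v2 v3))*v2*v3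

/-- right-hand side of the evolution equation. -/
def rhsN (γ sp sm s12 s13 s23 N lam A Om v1 v2 v3 : ℝ) : ℝ :=
  (qdef γ sp sm s12 s13 s23 Om v1 v2 v3 + 2*sp + 2*Real.sqrt 3*s23*lam) * N

/-- right-hand side of the evolution equation. -/
def rhsLam (γ sp sm s12 s13 s23 N lam A Om v1 v2 v3 : ℝ) : ℝ :=
  2*Real.sqrt 3*s23*(1 - lam^2)

/-- right-hand side of the evolution equation. -/
def rhsA (γ sp sm s12 s13 s23 N lam A Om v1 v2 v3 : ℝ) : ℝ :=
  (qdef γ sp sm s12 s13 s23 Om v1 v2 v3 + 2*sp) * A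

/-- right-hand side of the evolution equation. -/
def rhsOm (γ sp sm s12 s13 s23 N lam A Om v1 v2 v3 : ℝ) : ℝ :=
  (Om/(Gp γ v1 v2 v3)) * (2*(qdef γ sp sm s12 s13 s23 Om v1 v2 v3) - (3*γ-2) + 2*γ*A*v1 + (2*(qdef γ sp sm s12 s13 s23 Om v1 v2 v3)*(γ-1) - (2-γ)) * Vsq v1 v2 v3 - γ*(Pdef sp sm s12 s13 s23 v1 v2 v3))

/-- right-hand side of the evolution equation. -/
def rhsV1 (γ sp sm s12 s13 s23 N lam A Om v1 v2 v3 : ℝ) : ℝ :=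
  ((Tdef γ sp sm s12 s13 s23 A v1 v2 v3) + 2*sp)*v1 - 2*Real.sqrt 3*s13*v3 - 2*Real.sqrt 3*s12*v2 - A*(v2^2 + v3^2) - Real.sqrt 3*N*(v2^2 - v3^2)

/-- right-hand side of the evolution equation. -/
def rhsV2 (γ sp sm s12 s13 s23 N lam A Om v1 v2 v3 : ℝ) : ℝ :=
  ((Tdef γ sp sm s12 s13 s23 A v1 v2 v3) - sp - Real.sqrt 3*sm)*v2 - Real.sqrt 3*(s23 + sm*lam)*v3 + Real.sqrt 3*lam*N*v1*v3 + (A + Real.sqrt 3*N)*v1*v2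

/-- right-hand side of the evolution equation. -/
def rhsV3 (γ sp sm s12 s13 s23 N lam A Om v1 v2 v3 : ℝ) : ℝ :=
  ((Tdef γ sp sm s12 s13 s23 A v1 v2 v3) - sp + Real.sqrt 3*sm)*v3 - Real.sqrt 3*(s23 - sm*lam)*v2 - Real.sqrt 3*lam*N*v1*v2 + (A - Real.sqrt 3*N)*v1*v3

/-- the five constraint equations (C1)-(C5). -/
def SatisfiesConstraints (γ sp sm s12 s13 s23 N lam A Om v1 v2 v3 : ℝ) : Prop :=
  Sig2 sp sm s12 s13 s23 + A^2 + N^2 + Om = 1 ∧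
  2*sp*A + 2*sm*N + γ*Om*v1/(Gp γ v1 v2 v3) = 0 ∧
  -(s12*(N + Real.sqrt 3*A) + s13*lam*N) + γ*Om*v2/(Gp γ v1 v2 v3) = 0 ∧
  s13*(N - Real.sqrt 3*A) + s12*lam*N + γ*Om*v3/(Gp γ v1 v2 v3) = 0 ∧
  3*A^2 = (1 - lam^2)*N^2

/-- equilibrium point: all twelve right-hand sides vanish. -/
def IsEquilibrium (γ sp sm s12 s13 s23 N lam A Om v1 v2 v3 : ℝ) : Prop :=
  rhsSp γ sp sm s12 s13 s23 N lam A Om v1 v2 v3 = 0 ∧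
  rhsSm γ sp sm s12 s13 s23 N lam A Om v1 v2 v3 = 0 ∧
  rhsS12 γ sp sm s12 s13 s23 N lam A Om v1 v2 v3 = 0 ∧
  rhsS13 γ sp sm s12 s13 s23 N lam A Om v1 v2 v3 = 0 ∧
  rhsS23 γ sp sm s12 s13 s23 N lam A Om v1 v2 v3 = 0 ∧
  rhsN γ sp sm s12 s13 s23 N lam A Om v1 v2 v3 = 0 ∧
  rhsLam γ sp sm s12 s13 s23 N lam A Om v1 v2 v3 = 0 ∧
  rhsA γ sp sm s12 s13 s23 N lam A Om v1 v2 v3 = 0 ∧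
  rhsOm γ sp sm s12 s13 s23 N lam A Om v1 v2 v3 = 0 ∧
  rhsV1 γ sp sm s12 s13 s23 N lam A Om v1 v2 v3 = 0 ∧
  rhsV2 γ sp sm s12 s13 s23 N lam A Om v1 v2 v3 = 0 ∧
  rhsV3 γ sp sm s12 s13 s23 N lam A Om v1 v2 v3 = 0

/-- a solution of the tilted Bianchi type VI_(-1/9) system on the set `dom`:
the twelve evolution equations and the five constraints hold at every `τ ∈ dom`. -/
def IsSolutionOn (γ : ℝ) (dom : Set ℝ) (sp sm s12 s13 s23 N lam A Om v1 v2 v3 : ℝ → ℝ) : Prop :=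
  ∀ τ ∈ dom,
    (HasDerivAt sp (rhsSp γ (sp τ) (sm τ) (s12 τ) (s13 τ) (s23 τ) (N τ) (lam τ) (A τ) (Om τ) (v1 τ) (v2 τ) (v3 τ)) τ ∧
    HasDerivAt sm (rhsSm γ (sp τ) (sm τ) (s12 τ) (s13 τ) (s23 τ) (N τ) (lam τ) (A τ) (Om τ) (v1 τ) (v2 τ) (v3 τ)) τ ∧
    HasDerivAt s12 (rhsS12 γ (sp τ) (sm τ) (s12 τ) (s13 τ) (s23 τ) (N τ) (lam τ) (A τ) (Om τ) (v1 τ) (v2 τ) (v3 τ)) τ ∧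
    HasDerivAt s13 (rhsS13 γ (sp τ) (sm τ) (s12 τ) (s13 τ) (s23 τ) (N τ) (lam τ) (A τ) (Om τ) (v1 τ) (v2 τ) (v3 τ)) τ ∧
    HasDerivAt s23 (rhsS23 γ (sp τ) (sm τ) (s12 τ) (s13 τ) (s23 τ) (N τ) (lam τ) (A τ) (Om τ) (v1 τ) (v2 τ) (v3 τ)) τ ∧
    HasDerivAt N (rhsN γ (sp τ) (sm τ) (s12 τ) (s13 τ) (s23 τ) (N τ) (lam τ) (A τ) (Om τ) (v1 τ) (v2 τ) (v3 τ)) τ ∧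
    HasDerivAt lam (rhsLam γ (sp τ) (sm τ) (s12 τ) (s13 τ) (s23 τ) (N τ) (lam τ) (A τ) (Om τ) (v1 τ) (v2 τ) (v3 τ)) τ ∧
    HasDerivAt A (rhsA γ (sp τ) (sm τ) (s12 τ) (s13 τ) (s23 τ) (N τ) (lam τ) (A τ) (Om τ) (v1 τ) (v2 τ) (v3 τ)) τ ∧
    HasDerivAt Om (rhsOm γ (sp τ) (sm τ) (s12 τ) (s13 τ) (s23 τ) (N τ) (lam τ) (A τ) (Om τ) (v1 τ) (v2 τ) (v3 τ)) τ ∧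
    HasDerivAt v1 (rhsV1 γ (sp τ) (sm τ) (s12 τ) (s13 τ) (s23 τ) (N τ) (lam τ) (A τ) (Om τ) (v1 τ) (v2 τ) (v3 τ)) τ ∧
    HasDerivAt v2 (rhsV2 γ (sp τ) (sm τ) (s12 τ) (s13 τ) (s23 τ) (N τ) (lam τ) (A τ) (Om τ) (v1 τ) (v2 τ) (v3 τ)) τ ∧
    HasDerivAt v3 (rhsV3 γ (sp τ) (sm τ) (s12 τ) (s13 τ) (s23 τ) (N τ) (lam τ) (A τ) (Om τ) (v1 τ) (v2 τ) (v3 τ)) τ) ∧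
    SatisfiesConstraints γ (sp τ) (sm τ) (s12 τ) (s13 τ) (s23 τ) (N τ) (lam τ) (A τ) (Om τ) (v1 τ) (v2 τ) (v3 τ)

/-- the monotone function `Z1`. -/
def Z1fun (γ : ℝ) (Om v1 v2 v3 : ℝ → ℝ) : ℝ → ℝ := fun τ =>
  Om τ ^ (1 - γ) * (1 - Vsq (v1 τ) (v2 τ) (v3 τ)) ^ ((2 - γ)/2)
    / (Gp γ (v1 τ) (v2 τ) (v3 τ) ^ (1 - γ) * Real.sqrt (Vsq (v1 τ) (v2 τ) (v3 τ)) ^ γ)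

private lemma Z1aux (γ q S OO W G P T x R Omp a b c d : ℝ)
    (hOO : OO ≠ 0) (hW : W ≠ 0) (h1W : 1 - W ≠ 0) (hG : G ≠ 0)
    (hF : 1 - (γ - 1) * W ≠ 0) (hc : c ≠ 0) (hd : d ≠ 0)
    (hGdef : G = 1 + (γ - 1) * W)
    (hS : S = P / W)
    (hT : T = (((3*γ - 4) - 2*(γ - 1)*x) * (1 - W) + (2 - γ) * P) / (1 - (γ - 1) * W))
    (hR : R = 2 * (T * W - P))
    (hOmp : Omp = OO / G * (2*q - (3*γ - 2) + 2*γ*x + (2*q*(γ - 1) - (2 - γ)) * W - γ*P)) :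
    (2*(1 - γ)*q + (2 - γ) + γ*S) * (a * b / (c * d))
      = (((Omp * (1 - γ) * (a / OO)) * b + a * (-R * ((2 - γ)/2) * (b / (1 - W)))) * (c * d)
          - a * b * (((γ - 1) * R * (1 - γ) * (c / G)) * d + c * (R * (γ/2) * (d / W)))) / (c * d)^2 := by
  subst hS hT hR hOmp
  generalize hF2 : 1 - (γ - 1) * W = F at hF ⊢
  generalize hU : 1 - W = U at h1W ⊢
  field_simp
  subst hGdef hF2 hU
  ring

set_option maxHeartbeats 1000000 in
theorem Z1_evolution (γ : ℝ) (hγ : 0 < γ ∧ γ < 2) (dom : Set ℝ)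
    (sp sm s12 s13 s23 N lam A Om v1 v2 v3 : ℝ → ℝ)
    (hsol : IsSolutionOn γ dom sp sm s12 s13 s23 N lam A Om v1 v2 v3)
    (hOm : ∀ τ ∈ dom, 0 < Om τ)
    (hV : ∀ τ ∈ dom, 0 < Real.sqrt (Vsq (v1 τ) (v2 τ) (v3 τ)) ∧ Real.sqrt (Vsq (v1 τ) (v2 τ) (v3 τ)) < 1) :
    ∀ τ ∈ dom,
      HasDerivAt (Z1fun γ Om v1 v2 v3)
        ((2*(1-γ)*(qdef γ (sp τ) (sm τ) (s12 τ) (s13 τ) (s23 τ) (Om τ) (v1 τ) (v2 τ) (v3 τ)) + (2-γ) + γ * Sdef (sp τ) (sm τ) (s12 τ) (s13 τ) (s23 τ) (v1 τ) (v2 τ) (v3 τ))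
          * Z1fun γ Om v1 v2 v3 τ) τ := by
  intro τ hτ
  obtain ⟨⟨hdSp, hdSm, hdS12, hdS13, hdS23, hdN, hdLam, hdA, hdOm, hdV1, hdV2, hdV3⟩, hcon⟩ :=
    hsol τ hτ
  have hOmτ : 0 < Om τ := hOm τ hτ
  obtain ⟨hV0, hV1'⟩ := hV τ hτ
  have hWnn : (0:ℝ) ≤ Vsq (v1 τ) (v2 τ) (v3 τ) := by unfold Vsq; positivity
  have hW0 : 0 < Vsq (v1 τ) (v2 τ) (v3 τ) := Real.sqrt_pos.mp hV0
  have hW1 : Vsq (v1 τ) (v2 τ) (v3 τ) < 1 := by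
    nlinarith [Real.sq_sqrt hWnn, Real.sqrt_nonneg (Vsq (v1 τ) (v2 τ) (v3 τ))]
  have hG0 : 0 < Gp γ (v1 τ) (v2 τ) (v3 τ) := by
    unfold Gp; nlinarith [hγ.1, hγ.2]
  have hF0 : 0 < 1 - (γ - 1) * Vsq (v1 τ) (v2 τ) (v3 τ) := by
    nlinarith [hγ.1, hγ.2]
  -- rewrite Z1fun in rpow form
  have hz1g : Z1fun γ Om v1 v2 v3 = fun t =>
      Om t ^ (1 - γ) * (1 - Vsq (v1 t) (v2 t) (v3 t)) ^ ((2 - γ)/2)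
        / (Gp γ (v1 t) (v2 t) (v3 t) ^ (1 - γ) * Vsq (v1 t) (v2 t) (v3 t) ^ (γ/2)) := by
    funext t
    have hnn : (0:ℝ) ≤ Vsq (v1 t) (v2 t) (v3 t) := by unfold Vsq; positivity
    simp only [Z1fun]
    rw [← Real.rpow_div_two_eq_sqrt γ hnn]
  rw [hz1g]
  -- derivative of V²
  have hWd : HasDerivAt (fun t => Vsq (v1 t) (v2 t) (v3 t))
      ((2:ℕ) * v1 τ ^ 1 * rhsV1 γ (sp τ) (sm τ) (s12 τ) (s13 τ) (s23 τ) (N τ) (lam τ) (A τ) (Om τ) (v1 τ) (v2 τ) (v3 τ)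
        + (2:ℕ) * v2 τ ^ 1 * rhsV2 γ (sp τ) (sm τ) (s12 τ) (s13 τ) (s23 τ) (N τ) (lam τ) (A τ) (Om τ) (v1 τ) (v2 τ) (v3 τ)
        + (2:ℕ) * v3 τ ^ 1 * rhsV3 γ (sp τ) (sm τ) (s12 τ) (s13 τ) (s23 τ) (N τ) (lam τ) (A τ) (Om τ) (v1 τ) (v2 τ) (v3 τ)) τ :=
    ((hdV1.pow 2).add (hdV2.pow 2)).add (hdV3.pow 2)
  -- the key cancellation: W' = 2 (T V² − P)
  have hWpEq : (2:ℕ) * v1 τ ^ 1 * rhsV1 γ (sp τ) (sm τ) (s12 τ) (s13 τ) (s23 τ) (N τ) (lam τ) (A τ) (Om τ) (v1 τ) (v2 τ) (v3 τ)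
        + (2:ℕ) * v2 τ ^ 1 * rhsV2 γ (sp τ) (sm τ) (s12 τ) (s13 τ) (s23 τ) (N τ) (lam τ) (A τ) (Om τ) (v1 τ) (v2 τ) (v3 τ)
        + (2:ℕ) * v3 τ ^ 1 * rhsV3 γ (sp τ) (sm τ) (s12 τ) (s13 τ) (s23 τ) (N τ) (lam τ) (A τ) (Om τ) (v1 τ) (v2 τ) (v3 τ)
      = 2 * (Tdef γ (sp τ) (sm τ) (s12 τ) (s13 τ) (s23 τ) (A τ) (v1 τ) (v2 τ) (v3 τ) * Vsq (v1 τ) (v2 τ) (v3 τ)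
          - Pdef (sp τ) (sm τ) (s12 τ) (s13 τ) (s23 τ) (v1 τ) (v2 τ) (v3 τ)) := by
    simp only [rhsV1, rhsV2, rhsV3, Pdef, Vsq]
    push_cast
    ring
  have h1Wd := hWd.const_sub 1
  have hGd : HasDerivAt (fun t => Gp γ (v1 t) (v2 t) (v3 t))
      ((γ - 1) * ((2:ℕ) * v1 τ ^ 1 * rhsV1 γ (sp τ) (sm τ) (s12 τ) (s13 τ) (s23 τ) (N τ) (lam τ) (A τ) (Om τ) (v1 τ) (v2 τ) (v3 τ)
        + (2:ℕ) * v2 τ ^ 1 * rhsV2 γ (sp τ) (sm τ) (s12 τ) (s13 τ) (s23 τ) (N τ) (lam τ) (A τ) (Om τ) (v1 τ) (v2 τ) (v3 τ)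
        + (2:ℕ) * v3 τ ^ 1 * rhsV3 γ (sp τ) (sm τ) (s12 τ) (s13 τ) (s23 τ) (N τ) (lam τ) (A τ) (Om τ) (v1 τ) (v2 τ) (v3 τ))) τ :=
    ((hWd.const_mul (γ - 1)).const_add 1)
  have hnum := (hdOm.rpow_const (p := 1 - γ) (Or.inl hOmτ.ne')).mul
    (h1Wd.rpow_const (p := (2 - γ)/2) (Or.inl (by linarith : (1:ℝ) - Vsq (v1 τ) (v2 τ) (v3 τ) ≠ 0)))
  have hden := (hGd.rpow_const (p := 1 - γ) (Or.inl hG0.ne')).mul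
    (hWd.rpow_const (p := γ/2) (Or.inl hW0.ne'))
  have hdenne : Gp γ (v1 τ) (v2 τ) (v3 τ) ^ (1 - γ) * Vsq (v1 τ) (v2 τ) (v3 τ) ^ (γ/2) ≠ 0 := by
    positivity
  have hZ := hnum.div hden hdenne
  convert hZ using 1
  case e'_4 => rfl
  case e'_5 => rfl
  case e'_8 => rfl
  have ha : Om τ ^ (1 - γ) ≠ 0 := by positivity
  have hb : (1 - Vsq (v1 τ) (v2 τ) (v3 τ)) ^ ((2 - γ)/2) ≠ 0 := by
    have : (0:ℝ) < 1 - Vsq (v1 τ) (v2 τ) (v3 τ) := by linarith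
    positivity
  have hc : Gp γ (v1 τ) (v2 τ) (v3 τ) ^ (1 - γ) ≠ 0 := by positivity
  have hd : Vsq (v1 τ) (v2 τ) (v3 τ) ^ (γ/2) ≠ 0 := by positivity
  have h1Wne : (1:ℝ) - Vsq (v1 τ) (v2 τ) (v3 τ) ≠ 0 := by linarith
  have hFne : (1:ℝ) - (γ - 1) * Vsq (v1 τ) (v2 τ) (v3 τ) ≠ 0 := hF0.ne'
  rw [Real.rpow_sub_one hOmτ.ne' (1 - γ),
    Real.rpow_sub_one h1Wne ((2 - γ)/2),
    Real.rpow_sub_one hG0.ne' (1 - γ),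
    Real.rpow_sub_one hW0.ne' (γ/2)]
  have hSeq : Sdef (sp τ) (sm τ) (s12 τ) (s13 τ) (s23 τ) (v1 τ) (v2 τ) (v3 τ)
      = Pdef (sp τ) (sm τ) (s12 τ) (s13 τ) (s23 τ) (v1 τ) (v2 τ) (v3 τ) / Vsq (v1 τ) (v2 τ) (v3 τ) := by
    simp only [Sdef, if_pos hW0]
  have hTeq : Tdef γ (sp τ) (sm τ) (s12 τ) (s13 τ) (s23 τ) (A τ) (v1 τ) (v2 τ) (v3 τ)
      = (((3*γ - 4) - 2*(γ - 1)*(A τ * v1 τ)) * (1 - Vsq (v1 τ) (v2 τ) (v3 τ))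
          + (2 - γ) * Pdef (sp τ) (sm τ) (s12 τ) (s13 τ) (s23 τ) (v1 τ) (v2 τ) (v3 τ))
        / (1 - (γ - 1) * Vsq (v1 τ) (v2 τ) (v3 τ)) := by
    simp only [Tdef]; congr 1; ring
  have hOmpEq : rhsOm γ (sp τ) (sm τ) (s12 τ) (s13 τ) (s23 τ) (N τ) (lam τ) (A τ) (Om τ) (v1 τ) (v2 τ) (v3 τ)
      = Om τ / Gp γ (v1 τ) (v2 τ) (v3 τ)
        * (2*(qdef γ (sp τ) (sm τ) (s12 τ) (s13 τ) (s23 τ) (Om τ) (v1 τ) (v2 τ) (v3 τ)) - (3*γ - 2)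
            + 2*γ*(A τ * v1 τ)
            + (2*(qdef γ (sp τ) (sm τ) (s12 τ) (s13 τ) (s23 τ) (Om τ) (v1 τ) (v2 τ) (v3 τ))*(γ - 1) - (2 - γ))
              * Vsq (v1 τ) (v2 τ) (v3 τ)
            - γ*Pdef (sp τ) (sm τ) (s12 τ) (s13 τ) (s23 τ) (v1 τ) (v2 τ) (v3 τ)) := by
    simp only [rhsOm]; ring
  have key := Z1aux γ
    (qdef γ (sp τ) (sm τ) (s12 τ) (s13 τ) (s23 τ) (Om τ) (v1 τ) (v2 τ) (v3 τ))
    (Sdef (sp τ) (sm τ) (s12 τ) (s13 τ) (s23 τ) (v1 τ) (v2 τ) (v3 τ))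
    (Om τ) (Vsq (v1 τ) (v2 τ) (v3 τ)) (Gp γ (v1 τ) (v2 τ) (v3 τ))
    (Pdef (sp τ) (sm τ) (s12 τ) (s13 τ) (s23 τ) (v1 τ) (v2 τ) (v3 τ))
    (Tdef γ (sp τ) (sm τ) (s12 τ) (s13 τ) (s23 τ) (A τ) (v1 τ) (v2 τ) (v3 τ))
    (A τ * v1 τ)
    ((2:ℕ) * v1 τ ^ 1 * rhsV1 γ (sp τ) (sm τ) (s12 τ) (s13 τ) (s23 τ) (N τ) (lam τ) (A τ) (Om τ) (v1 τ) (v2 τ) (v3 τ)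
      + (2:ℕ) * v2 τ ^ 1 * rhsV2 γ (sp τ) (sm τ) (s12 τ) (s13 τ) (s23 τ) (N τ) (lam τ) (A τ) (Om τ) (v1 τ) (v2 τ) (v3 τ)
      + (2:ℕ) * v3 τ ^ 1 * rhsV3 γ (sp τ) (sm τ) (s12 τ) (s13 τ) (s23 τ) (N τ) (lam τ) (A τ) (Om τ) (v1 τ) (v2 τ) (v3 τ))
    (rhsOm γ (sp τ) (sm τ) (s12 τ) (s13 τ) (s23 τ) (N τ) (lam τ) (A τ) (Om τ) (v1 τ) (v2 τ) (v3 τ))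
    (Om τ ^ (1 - γ)) ((1 - Vsq (v1 τ) (v2 τ) (v3 τ)) ^ ((2 - γ)/2))
    (Gp γ (v1 τ) (v2 τ) (v3 τ) ^ (1 - γ)) (Vsq (v1 τ) (v2 τ) (v3 τ) ^ (γ/2))
    hOmτ.ne' hW0.ne' h1Wne hG0.ne' hFne hc hd rfl hSeq hTeq hWpEq hOmpEq
  simp only [Pi.mul_apply]
  beta_reduce
  linear_combination key

end BianchiVI
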